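/- arXiv:2002.08389 — 4 statements merged into one kernel-verified Lean document; each statement's English description precedes it below -/
import Mathlib

section
/- Let θ : {−1,1}ⁿ → ℝ and φ : {−1,1}^m → ℝ satisfy Σ_z |θ(z)| = 1, Σ_x |φ(x)| = 1, and Σ_x φ(x) = 0. Define the dual block composition (θ ⋆ φ)(x_1, …, x_n) = 2ⁿ · θ(sgn(φ(x_1)), …, sgn(φ(x_n))) · Π_{i=1}^n |φ(x_i)| for x_i ∈ {−1,1}^m. Then Σ_{x ∈ ({−1,1}^m)ⁿ} |(θ ⋆ φ)(x)| = 1. -/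
/-- Dual block composition preserves the ℓ₁-norm.  Strings in `{-1,1}^m` are encoded as
`Fin m → Bool` with `true` representing `-1`; `sgn r = -1` iff `r < 0`, so the sign string
fed to `θ` records for each block whether `φ` is negative there. -/
theorem dual_block_composition_l1_norm (n m : ℕ)
    (θ : (Fin n → Bool) → ℝ) (φ : (Fin m → Bool) → ℝ)
    (hθ : ∑ z, |θ z| = 1)
    (hφ1 : ∑ x, |φ x| = 1)
    (hφ0 : ∑ x, φ x = 0) :
    ∑ x : Fin n → Fin m → Bool,
        abs ((2 : ℝ) ^ n * θ (fun i => decide (φ (x i) < 0)) * ∏ i, |φ (x i)|) = 1 := by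
  set g : Bool → (Fin m → Bool) → ℝ :=
    fun b y => if decide (φ y < 0) = b then |φ y| else 0 with hg
  have key : ∀ b : Bool, ∑ y : Fin m → Bool, g b y = 1 / 2 := by
    intro b
    have hpt : ∀ y, g b y = (|φ y| + (if b then -φ y else φ y)) / 2 := by
      intro y
      by_cases h : φ y < 0
      · cases b <;> simp [hg, h, abs_of_neg h] <;> ring
      · cases b <;> simp [hg, h, abs_of_nonneg (not_lt.1 h)] <;> ring
    rw [Finset.sum_congr rfl fun y _ => hpt y, ← Finset.sum_div,
      Finset.sum_add_distrib]
    cases b <;> simp [hφ1, hφ0] <;> norm_num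
  have step1 : ∀ x : Fin n → Fin m → Bool,
      abs ((2 : ℝ) ^ n * θ (fun i => decide (φ (x i) < 0)) * ∏ i, |φ (x i)|)
        = ∑ z : Fin n → Bool, (2 : ℝ) ^ n * |θ z| * ∏ i, g (z i) (x i) := by
    intro x
    rw [Finset.sum_eq_single (fun i => decide (φ (x i) < 0))]
    · have hG : ∀ i, g (decide (φ (x i) < 0)) (x i) = |φ (x i)| := by
        intro i; simp [hg]
      rw [Finset.prod_congr rfl fun i _ => hG i, abs_mul, abs_mul]
      rw [abs_of_nonneg (by positivity : (0:ℝ) ≤ (2:ℝ)^n),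
        abs_of_nonneg (Finset.prod_nonneg fun i _ => abs_nonneg (φ (x i)))]
    · intro z _ hz
      have hex : ∃ i, decide (φ (x i) < 0) ≠ z i := by
        by_contra h
        push_neg at h
        exact hz (funext fun i => (h i).symm)
      obtain ⟨i, hi⟩ := hex
      have h0 : g (z i) (x i) = 0 := by simp [hg, hi]
      rw [Finset.prod_eq_zero (Finset.mem_univ i) h0, mul_zero]
    · intro h; exact absurd (Finset.mem_univ _) h
  rw [Finset.sum_congr rfl fun x _ => step1 x, Finset.sum_comm]
  have main : ∀ z : Fin n → Bool,
      ∑ x : Fin n → Fin m → Bool, (2 : ℝ) ^ n * |θ z| * ∏ i, g (z i) (x i)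
        = |θ z| := by
    intro z
    rw [← Finset.mul_sum]
    have hpi : ∑ x : Fin n → Fin m → Bool, ∏ i, g (z i) (x i)
        = ∏ i : Fin n, ∑ y : Fin m → Bool, g (z i) y := by
      rw [Finset.prod_univ_sum]
      rfl
    rw [hpi, Finset.prod_congr rfl fun i _ => key (z i), Finset.prod_const,
      Finset.card_univ]
    have h2 : ((1:ℝ)/2) ^ (Fintype.card (Fin n)) * 2 ^ n = 1 := by
      rw [Fintype.card_fin, ← mul_pow]; norm_num
    rw [mul_comm ((2:ℝ)^n * |θ z|), ← mul_assoc] at *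
    calc ((1:ℝ)/2) ^ Fintype.card (Fin n) * 2 ^ n * |θ z| = 1 * |θ z| := by rw [h2]
      _ = |θ z| := one_mul _
  rw [Finset.sum_congr rfl fun z _ => main z, hθ]
end

section
/- Let η < n be positive integers and let p_η : ℝⁿ → ℝ be the multilinear polynomial agreeing with z ↦ (−1)^η Π_{i=1}^η (|z| − i) on {−1,1}ⁿ. Then the sum of absolute values of its Fourier coefficients satisfies ‖p̂_η‖₁ ≤ η! · C(n + η, η). -/
open Finset

namespace PEtaAux

variable {n : ℕ}

def sgn (z : Fin n → Bool) (i : Fin n) : ℝ := if z i then -1 else 1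

def chi (S : Finset (Fin n)) (z : Fin n → Bool) : ℝ := ∏ i ∈ S, sgn z i

lemma sgn_sq (z : Fin n → Bool) (i : Fin n) : sgn z i * sgn z i = 1 := by
  unfold sgn; split <;> norm_num

lemma chi_sq (S : Finset (Fin n)) (z : Fin n → Bool) : chi S z * chi S z = 1 := by
  unfold chi
  rw [← Finset.prod_mul_distrib]
  exact Finset.prod_eq_one fun i _ => sgn_sq z i

lemma chi_mul (S T : Finset (Fin n)) (z : Fin n → Bool) :
    chi S z * chi T z = chi (symmDiff S T) z := by
  unfold chi
  have e1 : (∏ i ∈ S, sgn z i) = (∏ i ∈ S \ T, sgn z i) * ∏ i ∈ S ∩ T, sgn z i := by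
    rw [← Finset.prod_union (Finset.disjoint_sdiff_inter S T), Finset.sdiff_union_inter]
  have e2 : (∏ i ∈ T, sgn z i) = (∏ i ∈ T \ S, sgn z i) * ∏ i ∈ T ∩ S, sgn z i := by
    rw [← Finset.prod_union (Finset.disjoint_sdiff_inter T S), Finset.sdiff_union_inter]
  have hsd : (symmDiff S T : Finset (Fin n)) = (S \ T) ∪ (T \ S) := by
    rw [symmDiff_def]; rfl
  rw [e1, e2, hsd, Finset.prod_union (disjoint_sdiff_sdiff : Disjoint (S \ T) (T \ S))]
  have h1 : (∏ i ∈ S ∩ T, sgn z i) * ∏ i ∈ T ∩ S, sgn z i = 1 := by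
    rw [Finset.inter_comm T S, ← Finset.prod_mul_distrib]
    exact Finset.prod_eq_one fun i _ => sgn_sq z i
  calc (∏ i ∈ S \ T, sgn z i) * (∏ i ∈ S ∩ T, sgn z i) *
        ((∏ i ∈ T \ S, sgn z i) * ∏ i ∈ T ∩ S, sgn z i)
      = ((∏ i ∈ S \ T, sgn z i) * ∏ i ∈ T \ S, sgn z i) *
        ((∏ i ∈ S ∩ T, sgn z i) * ∏ i ∈ T ∩ S, sgn z i) := by ring
    _ = _ := by rw [h1, mul_one]

lemma sum_chi (U : Finset (Fin n)) :
    ∑ z : Fin n → Bool, chi U z = if U = ∅ then (2 : ℝ) ^ n else 0 := by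
  have h : ∀ z : Fin n → Bool, chi U z
      = ∏ i : Fin n, (if i ∈ U then (if z i then (-1 : ℝ) else 1) else 1) := by
    intro z
    rw [Finset.prod_ite_mem, Finset.univ_inter]
    rfl
  simp only [h]
  rw [show (∑ z : Fin n → Bool, ∏ i : Fin n, (if i ∈ U then (if z i then (-1:ℝ) else 1) else 1))
      = ∏ i : Fin n, ∑ b : Bool, (if i ∈ U then (if b then (-1:ℝ) else 1) else 1) by
    rw [Finset.prod_univ_sum]
    rw [Fintype.piFinset_univ]]
  have hb : ∀ i : Fin n, (∑ b : Bool, (if i ∈ U then (if b then (-1:ℝ) else 1) else 1))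
      = if i ∈ U then 0 else 2 := by
    intro i
    rw [Fintype.sum_bool]
    split <;> norm_num
  simp only [hb]
  by_cases hU : U = ∅
  · simp [hU]
  · rw [if_neg hU]
    obtain ⟨i, hi⟩ := Finset.nonempty_iff_ne_empty.2 hU
    exact Finset.prod_eq_zero (Finset.mem_univ i) (by simp [hi])

lemma orth (S T : Finset (Fin n)) :
    ∑ z : Fin n → Bool, chi S z * chi T z = if S = T then (2 : ℝ) ^ n else 0 := by
  simp only [chi_mul]
  rw [sum_chi]
  simp only [← Finset.bot_eq_empty, symmDiff_eq_bot]

lemma coeff_unique (c d : Finset (Fin n) → ℝ)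
    (h : ∀ z : Fin n → Bool, ∑ S : Finset (Fin n), c S * chi S z
        = ∑ S : Finset (Fin n), d S * chi S z) : c = d := by
  funext T
  have key : ∀ e : Finset (Fin n) → ℝ,
      ∑ z : Fin n → Bool, (∑ S : Finset (Fin n), e S * chi S z) * chi T z
        = e T * 2 ^ n := by
    intro e
    simp only [Finset.sum_mul, mul_assoc]
    rw [Finset.sum_comm]
    simp only [← Finset.mul_sum, orth]
    simp
  have := key c
  rw [Finset.sum_congr rfl fun z _ => by rw [h z]] at this
  rw [key d] at this
  have h2 : (2 : ℝ) ^ n ≠ 0 := by positivity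
  exact (mul_right_cancel₀ h2 this).symm

def conv (c d : Finset (Fin n) → ℝ) (U : Finset (Fin n)) : ℝ :=
  ∑ S : Finset (Fin n), c S * d (symmDiff S U)

def sdEquiv (S : Finset (Fin n)) : Finset (Fin n) ≃ Finset (Fin n) where
  toFun U := symmDiff S U
  invFun T := symmDiff S T
  left_inv U := symmDiff_symmDiff_cancel_left S U
  right_inv T := symmDiff_symmDiff_cancel_left S T

lemma eval_conv (c d : Finset (Fin n) → ℝ) (z : Fin n → Bool) :
    ∑ U : Finset (Fin n), conv c d U * chi U z
      = (∑ S : Finset (Fin n), c S * chi S z) * (∑ T : Finset (Fin n), d T * chi T z) := by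
  rw [Finset.sum_mul_sum]
  unfold conv
  simp only [Finset.sum_mul]
  rw [Finset.sum_comm]
  refine Finset.sum_congr rfl fun S _ => ?_
  refine Fintype.sum_equiv (sdEquiv S) _ _ fun U => ?_
  show c S * d (symmDiff S U) * chi U z = c S * chi S z * (d (symmDiff S U) * chi (symmDiff S U) z)
  rw [← chi_mul S U z]
  have hsq := chi_sq S z
  linear_combination (-(c S * d (symmDiff S U) * chi U z)) * hsq

lemma conv_norm (c d : Finset (Fin n) → ℝ) :
    ∑ U : Finset (Fin n), |conv c d U|
      ≤ (∑ S : Finset (Fin n), |c S|) * (∑ T : Finset (Fin n), |d T|) := by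
  calc ∑ U : Finset (Fin n), |conv c d U|
      ≤ ∑ U : Finset (Fin n), ∑ S : Finset (Fin n), |c S| * |d (symmDiff S U)| := by
        refine Finset.sum_le_sum fun U _ => ?_
        refine (Finset.abs_sum_le_sum_abs _ _).trans ?_
        refine le_of_eq (Finset.sum_congr rfl fun S _ => abs_mul _ _)
    _ = ∑ S : Finset (Fin n), |c S| * ∑ U : Finset (Fin n), |d (symmDiff S U)| := by
        rw [Finset.sum_comm]
        simp [Finset.mul_sum]
    _ = (∑ S : Finset (Fin n), |c S|) * (∑ T : Finset (Fin n), |d T|) := by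
        rw [Finset.sum_mul]
        refine Finset.sum_congr rfl fun S _ => ?_
        congr 1
        exact Fintype.sum_equiv (sdEquiv S) _ _ fun U => rfl

lemma exists_coeff_prod (A : Finset ℕ) (f : ℕ → Finset (Fin n) → ℝ) :
    ∃ d : Finset (Fin n) → ℝ,
      (∀ z : Fin n → Bool, ∑ S : Finset (Fin n), d S * chi S z
          = ∏ i ∈ A, ∑ S : Finset (Fin n), f i S * chi S z) ∧
      ∑ S : Finset (Fin n), |d S| ≤ ∏ i ∈ A, ∑ S : Finset (Fin n), |f i S| := by
  classical
  induction A using Finset.induction with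
  | empty =>
      refine ⟨fun S => if S = ∅ then 1 else 0, fun z => ?_, ?_⟩
      · simp [chi, Finset.sum_ite_eq', ite_mul]
      · simp [apply_ite abs, Finset.sum_ite_eq']
  | @insert a A ha ih =>
      obtain ⟨d, hd1, hd2⟩ := ih
      refine ⟨conv (f a) d, fun z => ?_, ?_⟩
      · rw [eval_conv, hd1, Finset.prod_insert ha]
      · rw [Finset.prod_insert ha]
        refine (conv_norm _ _).trans ?_
        refine mul_le_mul_of_nonneg_left hd2 ?_
        exact Finset.sum_nonneg fun S _ => abs_nonneg _


lemma sum_sgn (z : Fin n → Bool) :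
    ∑ j : Fin n, sgn z j = (n : ℝ) - 2 * ((Finset.univ.filter fun j => z j).card : ℝ) := by
  have h : ∀ j : Fin n, sgn z j = 1 - 2 * (if z j then (1:ℝ) else 0) := by
    intro j; unfold sgn; by_cases hj : z j <;> norm_num [hj]
  simp only [h]
  rw [Finset.sum_sub_distrib, ← Finset.mul_sum, Finset.sum_boole]
  simp [Finset.card_univ]

def lin (n : ℕ) (i : ℕ) (S : Finset (Fin n)) : ℝ :=
  if S = ∅ then 2 * i - n else if S.card = 1 then 1 else 0

lemma card_one_filter :
    (Finset.univ.filter fun S : Finset (Fin n) => S.card = 1)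
      = Finset.univ.image (fun j : Fin n => ({j} : Finset (Fin n))) := by
  ext S
  simp [Finset.card_eq_one, eq_comm]

lemma eval_lin (i : ℕ) (z : Fin n → Bool) :
    ∑ S : Finset (Fin n), lin n i S * chi S z
      = 2 * ((i : ℝ) - ((Finset.univ.filter fun j => z j).card : ℝ)) := by
  have split : ∀ S : Finset (Fin n), lin n i S * chi S z
      = (if S = ∅ then (2 * (i:ℝ) - n) * chi S z else 0)
        + (if S.card = 1 then chi S z else 0) := by
    intro S
    unfold lin
    by_cases h1 : S = ∅
    · subst h1; simp
    · by_cases h2 : S.card = 1 <;> simp [h1, h2]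
  rw [Finset.sum_congr rfl fun S _ => split S, Finset.sum_add_distrib]
  rw [Finset.sum_ite_eq' Finset.univ (∅ : Finset (Fin n))
    (fun S => (2 * (i:ℝ) - n) * chi S z)]
  rw [← Finset.sum_filter, card_one_filter,
    Finset.sum_image (fun a _ b _ h => Finset.singleton_injective h)]
  have hchi1 : ∀ j : Fin n, chi {j} z = sgn z j := fun j => by simp [chi]
  simp only [hchi1]
  rw [sum_sgn]
  simp [chi]
  ring

lemma norm_lin (i : ℕ) :
    ∑ S : Finset (Fin n), |lin n i S| = |2 * (i:ℝ) - n| + n := by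
  have split : ∀ S : Finset (Fin n), |lin n i S|
      = (if S = ∅ then |2 * (i:ℝ) - n| else 0)
        + (if S.card = 1 then (1:ℝ) else 0) := by
    intro S
    unfold lin
    by_cases h1 : S = ∅
    · subst h1; simp
    · by_cases h2 : S.card = 1 <;> simp [h1, h2]
  rw [Finset.sum_congr rfl fun S _ => split S, Finset.sum_add_distrib]
  rw [Finset.sum_ite_eq' Finset.univ (∅ : Finset (Fin n))
    (fun _ => |2 * (i:ℝ) - n|)]
  rw [Finset.sum_boole, card_one_filter,
    Finset.card_image_of_injective _ Finset.singleton_injective]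
  simp [Finset.card_univ]

end PEtaAux



/-- The ℓ₁ norm of the Fourier coefficients of the multilinear polynomial `p_η` agreeing
with `z ↦ (-1)^η ∏_{i=1}^η (|z| - i)` on `{-1,1}ⁿ` is at most `η! · C(n+η, η)`. -/
theorem p_eta_fourier_l1 (n η : ℕ) (hη : 0 < η) (hηn : η < n)
    (c : Finset (Fin n) → ℝ)
    (p : (Fin n → ℝ) → ℝ)
    (hp : ∀ y : Fin n → ℝ, p y = ∑ S : Finset (Fin n), c S * ∏ i ∈ S, y i)
    (hval : ∀ z : Fin n → Bool,
      p (fun i => if z i then -1 else 1)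
        = (-1 : ℝ) ^ η *
            ∏ i ∈ Finset.Icc 1 η, (((Finset.univ.filter fun j => z j).card : ℝ) - i)) :
    ∑ S : Finset (Fin n), |c S| ≤ (Nat.factorial η : ℝ) * ((n + η).choose η) := by
  classical
  have hn2 : 2 ≤ n := lt_of_le_of_lt hη hηn
  have hn2R : (2:ℝ) ≤ (n:ℝ) := by exact_mod_cast hn2
  obtain ⟨d, hd1, hd2⟩ := PEtaAux.exists_coeff_prod (Finset.Icc 1 η) (PEtaAux.lin n)
  have hcard : (Finset.Icc 1 η).card = η := by simp
  have hcd : c = fun S => ((2:ℝ)^η)⁻¹ * d S := by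
    apply PEtaAux.coeff_unique
    intro z
    have h1 : ∑ S : Finset (Fin n), c S * PEtaAux.chi S z
        = (-1:ℝ)^η * ∏ i ∈ Finset.Icc 1 η,
            (((Finset.univ.filter fun j => z j).card : ℝ) - i) := by
      have h := (hp (fun i => if z i then -1 else 1)).symm.trans (hval z)
      simpa [PEtaAux.chi, PEtaAux.sgn] using h
    have h2 : ∑ S : Finset (Fin n), ((2:ℝ)^η)⁻¹ * d S * PEtaAux.chi S z
        = ((2:ℝ)^η)⁻¹ * ∏ i ∈ Finset.Icc 1 η,
            (2 * ((i:ℝ) - ((Finset.univ.filter fun j => z j).card : ℝ))) := by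
      simp only [mul_assoc, ← Finset.mul_sum]
      rw [hd1 z]
      congr 1
      exact Finset.prod_congr rfl fun i _ => PEtaAux.eval_lin i z
    rw [h1, h2]
    set K : ℝ := ((Finset.univ.filter fun j => z j).card : ℝ) with hK
    have h3 : ∀ i ∈ Finset.Icc 1 η, 2 * ((i:ℝ) - K) = (-2) * (K - i) := fun i _ => by ring
    rw [Finset.prod_congr rfl h3, Finset.prod_mul_distrib, Finset.prod_const, hcard, neg_pow]
    have h2η : ((2:ℝ)^η) ≠ 0 := by positivity
    field_simp
    rw [show ((-2:ℝ))^η = (-1:ℝ)^η * 2^η by rw [neg_pow]]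
    ring
  have habsinv : |((2:ℝ)^η)⁻¹| = ((2:ℝ)^η)⁻¹ := abs_of_pos (by positivity)
  have habs : ∑ S : Finset (Fin n), |c S|
      = ((2:ℝ)^η)⁻¹ * ∑ S : Finset (Fin n), |d S| := by
    rw [hcd, Finset.mul_sum]
    exact Finset.sum_congr rfl fun S _ => by rw [abs_mul, habsinv]
  have hinvnn : (0:ℝ) ≤ ((2:ℝ)^η)⁻¹ := by positivity
  have hnat : (n+1)^η ≤ η.factorial * (n+η).choose η := by
    rw [← Nat.ascFactorial_eq_factorial_mul_choose]
    exact Nat.pow_succ_le_ascFactorial _ _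
  calc ∑ S : Finset (Fin n), |c S|
      = ((2:ℝ)^η)⁻¹ * ∑ S : Finset (Fin n), |d S| := habs
    _ ≤ ((2:ℝ)^η)⁻¹ * ∏ i ∈ Finset.Icc 1 η,
          ∑ S : Finset (Fin n), |PEtaAux.lin n i S| :=
        mul_le_mul_of_nonneg_left hd2 hinvnn
    _ = ((2:ℝ)^η)⁻¹ * ∏ i ∈ Finset.Icc 1 η, (|2 * (i:ℝ) - n| + n) := by
        rw [Finset.prod_congr rfl fun i _ => PEtaAux.norm_lin i]
    _ ≤ ((2:ℝ)^η)⁻¹ * ∏ i ∈ Finset.Icc 1 η, (2 * (n:ℝ) - 2) := by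
        refine mul_le_mul_of_nonneg_left ?_ hinvnn
        refine Finset.prod_le_prod (fun i _ => by positivity) (fun i hi => ?_)
        rw [Finset.mem_Icc] at hi
        have hi1 : (1:ℝ) ≤ (i:ℝ) := by exact_mod_cast hi.1
        have hi2 : (i:ℝ) + 1 ≤ (n:ℝ) := by
          have : i + 1 ≤ n := Nat.succ_le_of_lt (lt_of_le_of_lt hi.2 hηn)
          exact_mod_cast this
        have habsle : |2 * (i:ℝ) - n| ≤ (n:ℝ) - 2 :=
          abs_le.2 ⟨by linarith, by linarith⟩
        linarith
    _ = ((n:ℝ) - 1)^η := by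
        rw [Finset.prod_const, hcard,
          show (2 * (n:ℝ) - 2) = 2 * ((n:ℝ) - 1) by ring, mul_pow,
          inv_mul_cancel_left₀ (by positivity : ((2:ℝ)^η) ≠ 0)]
    _ ≤ ((n:ℝ) + 1)^η := pow_le_pow_left₀ (by linarith) (by linarith) η
    _ ≤ (Nat.factorial η : ℝ) * ((n + η).choose η) := by exact_mod_cast hnat
end

section
/- For integers m, R ≥ 1, define p : {−1,1}^R → ℝ by p(x) = 2·T_m((Σ_{i=1}^R x_i)/R + 1/R)/T_m(1 + 1/R) − 1, where T_m is the degree-m Chebyshev polynomial. Then p(1^R) = 1, and for every x ∈ {−1,1}^R with x ≠ 1^R, |p(x) − (−1)| ≤ 2/(1 + m²/R). In particular, p approximates OR_R pointwise to error 2/(1 + m²/R). -/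
open Polynomial

private lemma cheb_ge_aux (x : ℝ) (hx : 1 ≤ x) : ∀ n : ℕ,
    1 + (n : ℝ) ^ 2 * (x - 1) ≤ (Polynomial.Chebyshev.T ℝ n).eval x ∧
    (2 * n + 1) * (x - 1) ≤ (Polynomial.Chebyshev.T ℝ (n + 1)).eval x
        - (Polynomial.Chebyshev.T ℝ n).eval x := by
  intro n
  induction n with
  | zero =>
    constructor <;> simp [Polynomial.Chebyshev.T_zero, Polynomial.Chebyshev.T_one] <;> linarith
  | succ n ih =>
    obtain ⟨h1, h2⟩ := ih
    have hn1 : 1 + ((n : ℝ) + 1) ^ 2 * (x - 1)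
        ≤ (Polynomial.Chebyshev.T ℝ (n + 1)).eval x := by
      have : (Polynomial.Chebyshev.T ℝ (n + 1)).eval x
          ≥ (Polynomial.Chebyshev.T ℝ n).eval x + (2 * n + 1) * (x - 1) := by linarith
      nlinarith [sq_nonneg ((n:ℝ))]
    constructor
    · push_cast
      convert hn1 using 2
    · have hrec : (Polynomial.Chebyshev.T ℝ ((n : ℤ) + 2)).eval x
          = 2 * x * (Polynomial.Chebyshev.T ℝ (n + 1)).eval x
            - (Polynomial.Chebyshev.T ℝ n).eval x := by
        rw [Polynomial.Chebyshev.T_add_two]; simp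
      have hcast : ((n : ℕ) + 1 + 1 : ℤ) = (n : ℤ) + 2 := by push_cast; ring
      push_cast
      rw [show ((n : ℤ) + 1 + 1) = (n : ℤ) + 2 by ring, hrec]
      have hT1 : (1 : ℝ) ≤ (Polynomial.Chebyshev.T ℝ ((n : ℤ) + 1)).eval x := by
        nlinarith [sq_nonneg ((n:ℝ) + 1)]
      nlinarith [mul_nonneg (sub_nonneg.2 hx) (sub_nonneg.2 hT1)]

private lemma cheb_ge (x : ℝ) (hx : 1 ≤ x) (n : ℕ) :
    1 + (n : ℝ) ^ 2 * (x - 1) ≤ (Polynomial.Chebyshev.T ℝ n).eval x :=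
  (cheb_ge_aux x hx n).1

private lemma cheb_abs_le (y : ℝ) (h1 : -1 ≤ y) (h2 : y ≤ 1) (n : ℤ) :
    |(Polynomial.Chebyshev.T ℝ n).eval y| ≤ 1 := by
  have : y = Real.cos (Real.arccos y) := (Real.cos_arccos h1 h2).symm
  rw [this, Polynomial.Chebyshev.T_real_cos]
  exact Real.abs_cos_le_one _

/-- The scaled Chebyshev polynomial
`p(x) = 2·T_m((∑ x_i)/R + 1/R)/T_m(1 + 1/R) − 1` approximates `OR_R` pointwise to error
`2/(1 + m²/R)`: it equals `1` at the all-(+1) input and is within `2/(1 + m²/R)` of `-1`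
elsewhere.  The cube `{-1,1}^R` is encoded by `Fin R → Bool` with `true` representing `-1`. -/
theorem chebyshev_OR_approx (m R : ℕ) (hm : 1 ≤ m) (hR : 1 ≤ R)
    (p : (Fin R → Bool) → ℝ)
    (hp : ∀ x : Fin R → Bool,
      p x = 2 * (Polynomial.Chebyshev.T ℝ m).eval
              ((∑ i, (if x i then (-1 : ℝ) else 1)) / (R : ℝ) + 1 / (R : ℝ)) /
            (Polynomial.Chebyshev.T ℝ m).eval (1 + 1 / (R : ℝ)) - 1) :
    p (fun _ => false) = 1 ∧
      ∀ x : Fin R → Bool, x ≠ (fun _ => false) →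
        |p x - (-1)| ≤ 2 / (1 + (m : ℝ) ^ 2 / R) := by
  have hRpos : (0 : ℝ) < R := by exact_mod_cast hR
  have hmpos : (0 : ℝ) < (m : ℝ) ^ 2 := by positivity
  have hx1 : (1 : ℝ) ≤ 1 + 1 / (R : ℝ) := by
    have : 0 < 1 / (R : ℝ) := by positivity
    linarith
  have hTlb : 1 + (m : ℝ) ^ 2 / R ≤ (Polynomial.Chebyshev.T ℝ m).eval (1 + 1 / (R : ℝ)) := by
    have := cheb_ge (1 + 1 / (R : ℝ)) hx1 m
    have he : (1 : ℝ) + (m : ℝ) ^ 2 * (1 + 1 / (R : ℝ) - 1) = 1 + (m : ℝ) ^ 2 / R := by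
      field_simp
      ring
    linarith [he ▸ this]
  have hdpos : (0 : ℝ) < 1 + (m : ℝ) ^ 2 / R := by positivity
  have hTpos : (0 : ℝ) < (Polynomial.Chebyshev.T ℝ m).eval (1 + 1 / (R : ℝ)) :=
    lt_of_lt_of_le hdpos hTlb
  constructor
  · rw [hp]
    have hsum : (∑ _i : Fin R, (1 : ℝ)) = (R : ℝ) := by simp
    simp only [if_neg Bool.false_ne_true, Bool.false_eq_true, if_false]
    rw [hsum, div_self (ne_of_gt hRpos), mul_div_assoc, div_self (ne_of_gt hTpos)]
    norm_num
  · intro x hx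
    -- there exists i with x i = true
    have ⟨i0, hi0⟩ : ∃ i, x i = true := by
      by_contra h
      push_neg at h
      exact hx (funext fun i => by simpa using h i)
    set s : ℝ := ∑ i, (if x i then (-1 : ℝ) else 1) with hs
    have hsub : s ≤ (R : ℝ) - 2 := by
      have hsplit : s = -1 + ∑ i ∈ Finset.univ.erase i0, (if x i then (-1 : ℝ) else 1) := by
        rw [hs, ← Finset.add_sum_erase Finset.univ _ (Finset.mem_univ i0)]
        simp [hi0]
      rw [hsplit]
      have hb : (∑ i ∈ Finset.univ.erase i0, (if x i then (-1 : ℝ) else 1))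
          ≤ ∑ _i ∈ Finset.univ.erase i0, (1 : ℝ) := by
        apply Finset.sum_le_sum
        intro i _
        split <;> norm_num
      have hc : (∑ _i ∈ Finset.univ.erase i0, (1 : ℝ)) = (R : ℝ) - 1 := by
        rw [Finset.sum_const, Finset.card_erase_of_mem (Finset.mem_univ i0)]
        simp
        rw [Nat.cast_sub hR]
        simp
      linarith [hc ▸ hb]
    have hslb : -(R : ℝ) ≤ s := by
      rw [hs]
      calc -(R : ℝ) = ∑ _i : Fin R, (-1 : ℝ) := by simp
        _ ≤ _ := Finset.sum_le_sum (fun i _ => by split <;> norm_num)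
    set y : ℝ := s / R + 1 / R with hy
    have hy1 : -1 ≤ y := by
      rw [hy]
      rw [← add_div, le_div_iff₀ hRpos]
      linarith
    have hy2 : y ≤ 1 := by
      rw [hy, ← add_div, div_le_iff₀ hRpos]
      linarith
    have habs := cheb_abs_le y hy1 hy2 m
    rw [hp]
    have : 2 * (Polynomial.Chebyshev.T ℝ m).eval y
          / (Polynomial.Chebyshev.T ℝ m).eval (1 + 1 / (R : ℝ)) - 1 - (-1)
        = 2 * (Polynomial.Chebyshev.T ℝ m).eval y
          / (Polynomial.Chebyshev.T ℝ m).eval (1 + 1 / (R : ℝ)) := by ring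
    rw [this, abs_div, abs_mul]
    rw [abs_of_pos hTpos]
    rw [div_le_div_iff₀ hTpos hdpos]
    have h2 : |(2 : ℝ)| = 2 := by norm_num
    rw [h2]
    nlinarith [habs, hTlb, hdpos]
end

section
/- Let ν be the product distribution on {−1,1}ⁿ where each coordinate is −1 independently with probability τ ∈ [0,1), and let η < n be a positive integer. Let p_η be the multilinear polynomial agreeing with z ↦ (−1)^η Π_{i=1}^η (|z| − i) on {−1,1}ⁿ, where |z| is the Hamming weight of z. Then E_{z∼ν}[|p_η(z)|] ≤ p_η(1ⁿ)·(1−τ)ⁿ·(1 + A), where A = C(n, η+1)·τ^{η+1}/(1−τ)ⁿ. -/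
open Finset

lemma prod_Icc_sub_eq_descFactorial (η k : ℕ) (h : η + 1 ≤ k) :
    ∏ i ∈ Finset.Icc 1 η, ((k : ℝ) - (i : ℝ)) = ((k - 1).descFactorial η : ℕ) := by
  induction η with
  | zero => simp
  | succ m ih =>
    rw [Finset.prod_Icc_succ_top (Nat.le_add_left 1 m), ih (by omega),
      Nat.descFactorial_succ]
    rw [show k - 1 - m = k - (m + 1) from by omega]
    rw [Nat.cast_mul, Nat.cast_sub (by omega)]
    push_cast
    ring

lemma abs_prod_le_choose (η k : ℕ) (hk : 1 ≤ k) :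
    ∏ i ∈ Finset.Icc 1 η, |(k : ℝ) - (i : ℝ)| ≤ (η.factorial * k.choose (η + 1) : ℕ) := by
  rcases le_or_gt k η with hkη | hkη
  · have hz : ∏ i ∈ Finset.Icc 1 η, |(k : ℝ) - (i : ℝ)| = 0 :=
      Finset.prod_eq_zero (Finset.mem_Icc.mpr ⟨hk, hkη⟩) (by simp)
    rw [hz]; positivity
  · have habs : ∀ i ∈ Finset.Icc 1 η, |(k : ℝ) - (i : ℝ)| = (k : ℝ) - i := by
      intro i hi
      have h2 := (Finset.mem_Icc.mp hi).2
      have h3 : (i:ℝ) ≤ η := by exact_mod_cast h2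
      have h4 : (η:ℝ) < k := by exact_mod_cast hkη
      rw [abs_of_nonneg]; linarith
    rw [Finset.prod_congr rfl habs, prod_Icc_sub_eq_descFactorial η k hkη]
    have hnat : (k - 1).descFactorial η ≤ η.factorial * k.choose (η + 1) := by
      have h1 : k.descFactorial (η + 1) = k * (k - 1).descFactorial η := by
        obtain ⟨k', rfl⟩ : ∃ k', k = k' + 1 := ⟨k - 1, by omega⟩
        rw [Nat.succ_descFactorial_succ]; simp
      have h2 : k.descFactorial (η + 1) = (η + 1).factorial * k.choose (η + 1) :=
        Nat.descFactorial_eq_factorial_mul_choose k (η + 1)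
      have h3 : (η + 1) * (k - 1).descFactorial η
          ≤ (η + 1) * (η.factorial * k.choose (η + 1)) := by
        calc (η + 1) * (k - 1).descFactorial η ≤ k * (k - 1).descFactorial η :=
              Nat.mul_le_mul_right _ hkη
          _ = (η + 1).factorial * k.choose (η + 1) := by rw [← h1, h2]
          _ = (η + 1) * (η.factorial * k.choose (η + 1)) := by
              rw [Nat.factorial_succ]; ring
      exact Nat.le_of_mul_le_mul_left h3 (Nat.succ_pos η)
    exact_mod_cast hnat

lemma sum_prob_subset (n : ℕ) (τ : ℝ) (T : Finset (Fin n)) :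
    ∑ z : Fin n → Bool, (∏ i, (if z i then τ else 1 - τ)) *
        (if T ⊆ Finset.univ.filter (fun j => z j) then (1:ℝ) else 0)
      = τ ^ T.card := by
  set f : Fin n → Bool → ℝ := fun i b =>
    (if b then τ else 1 - τ) * (if i ∈ T then (if b then (1:ℝ) else 0) else 1) with hf
  have key : ∀ z : Fin n → Bool,
      (∏ i, (if z i then τ else 1 - τ)) *
        (if T ⊆ Finset.univ.filter (fun j => z j) then (1:ℝ) else 0)
      = ∏ i, f i (z i) := by
    intro z
    simp only [hf]
    rw [Finset.prod_mul_distrib]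
    congr 1
    by_cases h : T ⊆ Finset.univ.filter (fun j => z j)
    · rw [if_pos h, eq_comm]
      apply Finset.prod_eq_one
      intro i _
      by_cases hiT : i ∈ T
      · have hz : z i = true := by have := h hiT; simpa using this
        simp [hiT, hz]
      · simp [hiT]
    · rw [if_neg h, eq_comm]
      obtain ⟨i, hiT, hzi⟩ : ∃ i ∈ T, z i = false := by
        by_contra hc
        push_neg at hc
        refine h (fun i hi => ?_)
        simp only [Bool.not_eq_false] at hc
        simp [hc i hi]
      refine Finset.prod_eq_zero (Finset.mem_univ i) ?_
      simp [hiT, hzi]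
  simp_rw [key]
  rw [← Fintype.prod_sum f]
  have hib : ∀ i : Fin n, (∑ b : Bool, f i b) = if i ∈ T then τ else 1 := by
    intro i
    by_cases hiT : i ∈ T <;> simp [hf, hiT] <;> ring
  rw [Finset.prod_congr rfl fun i _ => hib i, Finset.prod_ite_mem, Finset.univ_inter,
    Finset.prod_const]

lemma sum_prob_choose (n η : ℕ) (τ : ℝ) :
    ∑ z : Fin n → Bool, (∏ i, (if z i then τ else 1 - τ)) *
        (((Finset.univ.filter fun j => z j).card.choose (η + 1) : ℕ) : ℝ)
      = (n.choose (η + 1) : ℝ) * τ ^ (η + 1) := by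
  have hchoose : ∀ z : Fin n → Bool,
      (((Finset.univ.filter fun j => z j).card.choose (η + 1) : ℕ) : ℝ)
        = ∑ T ∈ Finset.powersetCard (η + 1) (Finset.univ : Finset (Fin n)),
            (if T ⊆ Finset.univ.filter (fun j => z j) then (1:ℝ) else 0) := by
    intro z
    rw [Finset.sum_boole]
    have hfilt : (Finset.powersetCard (η + 1) (Finset.univ : Finset (Fin n))).filter
        (fun T => T ⊆ Finset.univ.filter (fun j => z j))
        = Finset.powersetCard (η + 1) (Finset.univ.filter (fun j => z j)) := by
      ext T
      simp only [Finset.mem_filter, Finset.mem_powersetCard, Finset.subset_univ, true_and]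
      tauto
    rw [hfilt, Finset.card_powersetCard]
  simp_rw [hchoose, Finset.mul_sum]
  rw [Finset.sum_comm]
  have hinner : ∀ T ∈ Finset.powersetCard (η + 1) (Finset.univ : Finset (Fin n)),
      (∑ z : Fin n → Bool, (∏ i, (if z i then τ else 1 - τ)) *
        (if T ⊆ Finset.univ.filter (fun j => z j) then (1:ℝ) else 0)) = τ ^ (η + 1) := by
    intro T hT
    rw [sum_prob_subset]
    congr 1
    exact (Finset.mem_powersetCard.mp hT).2
  rw [Finset.sum_congr rfl hinner, Finset.sum_const, Finset.card_powersetCard,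
    Finset.card_univ, Fintype.card_fin, nsmul_eq_mul]

lemma Icc_one_prod_id_eq_factorial (η : ℕ) : ∏ i ∈ Finset.Icc 1 η, i = η.factorial := by
  induction η with
  | zero => simp
  | succ m ih =>
    rw [Finset.prod_Icc_succ_top (Nat.le_add_left 1 m), ih, Nat.factorial_succ]; ring



/-- Bound on the expected absolute value of `p_η` under the product distribution on
`{-1,1}ⁿ` in which each coordinate is `-1` independently with probability `τ`:
`E[|p_η(z)|] ≤ p_η(1ⁿ)·(1-τ)ⁿ·(1 + A)` with `A = C(n, η+1)·τ^{η+1}/(1-τ)ⁿ`.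
`true` encodes `-1`, and `p_η` is the multilinear polynomial agreeing with
`z ↦ (-1)^η ∏_{i=1}^η (|z| - i)` on the cube. -/
theorem p_eta_expectation_bound (n η : ℕ) (hη : 0 < η) (hηn : η < n)
    (τ : ℝ) (hτ0 : 0 ≤ τ) (hτ1 : τ < 1)
    (c : Finset (Fin n) → ℝ)
    (p : (Fin n → ℝ) → ℝ)
    (hp : ∀ y : Fin n → ℝ, p y = ∑ S : Finset (Fin n), c S * ∏ i ∈ S, y i)
    (hval : ∀ z : Fin n → Bool,
      p (fun i => if z i then -1 else 1)
        = (-1 : ℝ) ^ η *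
            ∏ i ∈ Finset.Icc 1 η, (((Finset.univ.filter fun j => z j).card : ℝ) - i)) :
    ∑ z : Fin n → Bool,
        (∏ i, (if z i then τ else 1 - τ)) * |p (fun i => if z i then -1 else 1)|
      ≤ p (fun _ => 1) * (1 - τ) ^ n *
          (1 + (n.choose (η + 1) : ℝ) * τ ^ (η + 1) / (1 - τ) ^ n) := by
  have h1τ : (0:ℝ) < 1 - τ := by linarith
  have hpow : (0:ℝ) < (1 - τ) ^ n := pow_pos h1τ n
  -- value at all ones
  have hfactIcc : ∏ i ∈ Finset.Icc 1 η, ((i:ℕ):ℝ) = (η.factorial : ℝ) := by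
    rw [← Nat.cast_prod, Icc_one_prod_id_eq_factorial]
  have hp1 : p (fun _ => 1) = (η.factorial : ℝ) := by
    have h := hval (fun _ => false)
    simp only [Bool.false_eq_true, if_false, Finset.filter_false, Finset.card_empty,
      Nat.cast_zero, zero_sub] at h
    rw [h]
    have : ∏ i ∈ Finset.Icc 1 η, (-(i:ℝ)) = (-1) ^ η * ∏ i ∈ Finset.Icc 1 η, ((i:ℕ):ℝ) := by
      rw [show ((-1:ℝ)) ^ η = ∏ _i ∈ Finset.Icc 1 η, (-1:ℝ) by
          rw [Finset.prod_const, Nat.card_Icc]; norm_num,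
        ← Finset.prod_mul_distrib]
      exact Finset.prod_congr rfl (fun i _ => by ring)
    rw [this, hfactIcc, ← mul_assoc, ← mul_pow]
    norm_num
  -- absolute values
  have habs : ∀ z : Fin n → Bool, |p (fun i => if z i then -1 else 1)| =
      ∏ i ∈ Finset.Icc 1 η, |((Finset.univ.filter fun j => z j).card : ℝ) - i| := by
    intro z
    rw [hval z, abs_mul, abs_pow, abs_neg, abs_one, one_pow, one_mul, Finset.abs_prod]
  simp_rw [habs]
  -- rewrite RHS
  have hRHS : p (fun _ => 1) * (1 - τ) ^ n *
      (1 + (n.choose (η + 1) : ℝ) * τ ^ (η + 1) / (1 - τ) ^ n)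
      = (1 - τ) ^ n * (η.factorial : ℝ)
        + (η.factorial : ℝ) * ((n.choose (η + 1) : ℝ) * τ ^ (η + 1)) := by
    rw [hp1]; field_simp
  rw [hRHS]
  -- split off the all-false point
  set z0 : Fin n → Bool := fun _ => false with hz0
  set g : (Fin n → Bool) → ℝ := fun z =>
    (∏ i, (if z i then τ else 1 - τ)) *
      ∏ i ∈ Finset.Icc 1 η, |((Finset.univ.filter fun j => z j).card : ℝ) - i| with hg
  have hsplit : ∑ z : Fin n → Bool, g z
      = g z0 + ∑ z ∈ Finset.univ.erase z0, g z :=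
    (Finset.add_sum_erase _ g (Finset.mem_univ z0)).symm
  have hgz0 : g z0 = (1 - τ) ^ n * (η.factorial : ℝ) := by
    simp only [hg, hz0, Bool.false_eq_true, if_false, Finset.filter_false,
      Finset.card_empty, Nat.cast_zero, zero_sub, Finset.prod_const, Finset.card_univ,
      Fintype.card_fin]
    congr 1
    rw [← hfactIcc]
    exact Finset.prod_congr rfl (fun i _ => by rw [abs_neg, Nat.abs_cast])
  show ∑ z : Fin n → Bool, g z ≤ _
  rw [hsplit, hgz0]
  apply add_le_add le_rfl
  have hterm : ∀ z ∈ Finset.univ.erase z0, g z ≤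
      (∏ i, (if z i then τ else 1 - τ)) *
        ((η.factorial * ((Finset.univ.filter fun j => z j).card.choose (η + 1)) : ℕ) : ℝ) := by
    intro z hz
    have hzne : z ≠ z0 := Finset.ne_of_mem_erase hz
    obtain ⟨a, ha⟩ : ∃ a, z a ≠ z0 a := Function.ne_iff.mp hzne
    have ha' : z a = true := by
      simp only [hz0] at ha
      exact Bool.not_eq_false (z a) ▸ (by simpa using ha)
    have hk : 1 ≤ (Finset.univ.filter fun j => z j).card :=
      Finset.card_pos.mpr ⟨a, Finset.mem_filter.mpr ⟨Finset.mem_univ a, ha'⟩⟩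
    exact mul_le_mul_of_nonneg_left
      (abs_prod_le_choose η _ hk)
      (Finset.prod_nonneg fun i _ => by split <;> linarith)
  calc ∑ z ∈ Finset.univ.erase z0, g z
      ≤ ∑ z ∈ Finset.univ.erase z0, (∏ i, (if z i then τ else 1 - τ)) *
          ((η.factorial * ((Finset.univ.filter fun j => z j).card.choose (η + 1)) : ℕ) : ℝ) :=
        Finset.sum_le_sum hterm
    _ ≤ ∑ z : Fin n → Bool, (∏ i, (if z i then τ else 1 - τ)) *
          ((η.factorial * ((Finset.univ.filter fun j => z j).card.choose (η + 1)) : ℕ) : ℝ) := by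
        apply Finset.sum_le_sum_of_subset_of_nonneg (Finset.erase_subset _ _)
        intro z _ _
        have h0 : (0:ℝ) ≤ ∏ i, (if z i then τ else 1 - τ) :=
          Finset.prod_nonneg fun i _ => by split <;> linarith
        positivity
    _ = (η.factorial : ℝ) * ∑ z : Fin n → Bool, (∏ i, (if z i then τ else 1 - τ)) *
          ((((Finset.univ.filter fun j => z j).card.choose (η + 1) : ℕ)) : ℝ) := by
        rw [Finset.mul_sum]
        exact Finset.sum_congr rfl fun z _ => by push_cast; ring
    _ = (η.factorial : ℝ) * ((n.choose (η + 1) : ℝ) * τ ^ (η + 1)) := by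
        rw [sum_prob_choose]
end
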